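/- Let $h$ be a positive integer not divisible by $3$ with $\omega(h) \ge 52$. Then $2^{\omega(h)} < h^{4/25}$. -/

import Mathlib

set_option maxRecDepth 100000
set_option maxHeartbeats 2000000

attribute [local instance 2000] Nat.decidablePrime

private abbrev Pnot3 : ℕ → Prop := fun p => p.Prime ∧ p ≠ 3

private lemma pnot3_infinite : (setOf Pnot3).Infinite := by
  have : setOf Pnot3 = {p | p.Prime} \ {3} := by
    ext p; simp [Pnot3, Set.mem_diff]; exact Iff.rfl
  rw [this]
  exact Nat.infinite_setOf_prime.diff (Set.finite_singleton 3)

private lemma nth_eq (p i : ℕ) (hp : Pnot3 p) (hc : Nat.count Pnot3 p = i) :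
    Nat.nth Pnot3 i = p := hc ▸ Nat.nth_count hp

private lemma prod_nth_le : ∀ n : ℕ, ∀ S : Finset ℕ, S.card = n → (∀ p ∈ S, Pnot3 p) →
    ∏ i ∈ Finset.range n, Nat.nth Pnot3 i ≤ ∏ p ∈ S, p := by
  intro n
  induction n with
  | zero =>
    intro S hS _
    rw [Finset.card_eq_zero.mp hS]
    simp
  | succ n ih =>
    intro S hcard hmem
    have hne : S.Nonempty := Finset.card_pos.mp (by omega)
    set M := S.max' hne with hM
    have hMmem : M ∈ S := S.max'_mem hne
    have hqn : Nat.nth Pnot3 n ≤ M := by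
      by_contra hlt
      push_neg at hlt
      have hinj : Set.InjOn (Nat.count Pnot3) S := by
        intro a ha b hb hab
        have := congrArg (Nat.nth Pnot3) hab
        rwa [Nat.nth_count (hmem a ha), Nat.nth_count (hmem b hb)] at this
      have hsub : ∀ p ∈ S, Nat.count Pnot3 p ∈ Finset.range n := by
        intro p hp
        have hple : p ≤ M := S.le_max' p hp
        have hplt : p < Nat.nth Pnot3 n := lt_of_le_of_lt hple hlt
        have : Nat.nth Pnot3 (Nat.count Pnot3 p) < Nat.nth Pnot3 n := by
          rwa [Nat.nth_count (hmem p hp)]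
        rw [Nat.nth_lt_nth pnot3_infinite] at this
        simpa using this
      have := Finset.card_le_card_of_injOn _ hsub hinj
      simp [hcard] at this
    have herase : (S.erase M).card = n := by
      rw [Finset.card_erase_of_mem hMmem, hcard]
      omega
    have hmem' : ∀ p ∈ S.erase M, Pnot3 p := fun p hp => hmem p (Finset.mem_of_mem_erase hp)
    calc ∏ i ∈ Finset.range (n+1), Nat.nth Pnot3 i
        = (∏ i ∈ Finset.range n, Nat.nth Pnot3 i) * Nat.nth Pnot3 n := Finset.prod_range_succ _ _
      _ ≤ (∏ p ∈ S.erase M, p) * M :=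
          Nat.mul_le_mul (ih _ herase hmem') hqn
      _ = ∏ p ∈ S, p := by rw [mul_comm]; exact Finset.mul_prod_erase S (fun p => p) hMmem

private lemma prod_nth_52 : ∏ i ∈ Finset.range 52, Nat.nth Pnot3 i = 85347053011830869684370033503461770665179530666147686738704858805973639266773842168028155037495910 := by
  have e0 : Nat.nth Pnot3 0 = 2 := nth_eq 2 0 ⟨by norm_num, by norm_num⟩ (by decide)
  have e1 : Nat.nth Pnot3 1 = 5 := nth_eq 5 1 ⟨by norm_num, by norm_num⟩ (by decide)
  have e2 : Nat.nth Pnot3 2 = 7 := nth_eq 7 2 ⟨by norm_num, by norm_num⟩ (by decide)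
  have e3 : Nat.nth Pnot3 3 = 11 := nth_eq 11 3 ⟨by norm_num, by norm_num⟩ (by decide)
  have e4 : Nat.nth Pnot3 4 = 13 := nth_eq 13 4 ⟨by norm_num, by norm_num⟩ (by decide)
  have e5 : Nat.nth Pnot3 5 = 17 := nth_eq 17 5 ⟨by norm_num, by norm_num⟩ (by decide)
  have e6 : Nat.nth Pnot3 6 = 19 := nth_eq 19 6 ⟨by norm_num, by norm_num⟩ (by decide)
  have e7 : Nat.nth Pnot3 7 = 23 := nth_eq 23 7 ⟨by norm_num, by norm_num⟩ (by decide)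
  have e8 : Nat.nth Pnot3 8 = 29 := nth_eq 29 8 ⟨by norm_num, by norm_num⟩ (by decide)
  have e9 : Nat.nth Pnot3 9 = 31 := nth_eq 31 9 ⟨by norm_num, by norm_num⟩ (by decide)
  have e10 : Nat.nth Pnot3 10 = 37 := nth_eq 37 10 ⟨by norm_num, by norm_num⟩ (by decide)
  have e11 : Nat.nth Pnot3 11 = 41 := nth_eq 41 11 ⟨by norm_num, by norm_num⟩ (by decide)
  have e12 : Nat.nth Pnot3 12 = 43 := nth_eq 43 12 ⟨by norm_num, by norm_num⟩ (by decide)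
  have e13 : Nat.nth Pnot3 13 = 47 := nth_eq 47 13 ⟨by norm_num, by norm_num⟩ (by decide)
  have e14 : Nat.nth Pnot3 14 = 53 := nth_eq 53 14 ⟨by norm_num, by norm_num⟩ (by decide)
  have e15 : Nat.nth Pnot3 15 = 59 := nth_eq 59 15 ⟨by norm_num, by norm_num⟩ (by decide)
  have e16 : Nat.nth Pnot3 16 = 61 := nth_eq 61 16 ⟨by norm_num, by norm_num⟩ (by decide)
  have e17 : Nat.nth Pnot3 17 = 67 := nth_eq 67 17 ⟨by norm_num, by norm_num⟩ (by decide)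
  have e18 : Nat.nth Pnot3 18 = 71 := nth_eq 71 18 ⟨by norm_num, by norm_num⟩ (by decide)
  have e19 : Nat.nth Pnot3 19 = 73 := nth_eq 73 19 ⟨by norm_num, by norm_num⟩ (by decide)
  have e20 : Nat.nth Pnot3 20 = 79 := nth_eq 79 20 ⟨by norm_num, by norm_num⟩ (by decide)
  have e21 : Nat.nth Pnot3 21 = 83 := nth_eq 83 21 ⟨by norm_num, by norm_num⟩ (by decide)
  have e22 : Nat.nth Pnot3 22 = 89 := nth_eq 89 22 ⟨by norm_num, by norm_num⟩ (by decide)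
  have e23 : Nat.nth Pnot3 23 = 97 := nth_eq 97 23 ⟨by norm_num, by norm_num⟩ (by decide)
  have e24 : Nat.nth Pnot3 24 = 101 := nth_eq 101 24 ⟨by norm_num, by norm_num⟩ (by decide)
  have e25 : Nat.nth Pnot3 25 = 103 := nth_eq 103 25 ⟨by norm_num, by norm_num⟩ (by decide)
  have e26 : Nat.nth Pnot3 26 = 107 := nth_eq 107 26 ⟨by norm_num, by norm_num⟩ (by decide)
  have e27 : Nat.nth Pnot3 27 = 109 := nth_eq 109 27 ⟨by norm_num, by norm_num⟩ (by decide)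
  have e28 : Nat.nth Pnot3 28 = 113 := nth_eq 113 28 ⟨by norm_num, by norm_num⟩ (by decide)
  have e29 : Nat.nth Pnot3 29 = 127 := nth_eq 127 29 ⟨by norm_num, by norm_num⟩ (by decide)
  have e30 : Nat.nth Pnot3 30 = 131 := nth_eq 131 30 ⟨by norm_num, by norm_num⟩ (by decide)
  have e31 : Nat.nth Pnot3 31 = 137 := nth_eq 137 31 ⟨by norm_num, by norm_num⟩ (by decide)
  have e32 : Nat.nth Pnot3 32 = 139 := nth_eq 139 32 ⟨by norm_num, by norm_num⟩ (by decide)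
  have e33 : Nat.nth Pnot3 33 = 149 := nth_eq 149 33 ⟨by norm_num, by norm_num⟩ (by decide)
  have e34 : Nat.nth Pnot3 34 = 151 := nth_eq 151 34 ⟨by norm_num, by norm_num⟩ (by decide)
  have e35 : Nat.nth Pnot3 35 = 157 := nth_eq 157 35 ⟨by norm_num, by norm_num⟩ (by decide)
  have e36 : Nat.nth Pnot3 36 = 163 := nth_eq 163 36 ⟨by norm_num, by norm_num⟩ (by decide)
  have e37 : Nat.nth Pnot3 37 = 167 := nth_eq 167 37 ⟨by norm_num, by norm_num⟩ (by decide)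
  have e38 : Nat.nth Pnot3 38 = 173 := nth_eq 173 38 ⟨by norm_num, by norm_num⟩ (by decide)
  have e39 : Nat.nth Pnot3 39 = 179 := nth_eq 179 39 ⟨by norm_num, by norm_num⟩ (by decide)
  have e40 : Nat.nth Pnot3 40 = 181 := nth_eq 181 40 ⟨by norm_num, by norm_num⟩ (by decide)
  have e41 : Nat.nth Pnot3 41 = 191 := nth_eq 191 41 ⟨by norm_num, by norm_num⟩ (by decide)
  have e42 : Nat.nth Pnot3 42 = 193 := nth_eq 193 42 ⟨by norm_num, by norm_num⟩ (by decide)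
  have e43 : Nat.nth Pnot3 43 = 197 := nth_eq 197 43 ⟨by norm_num, by norm_num⟩ (by decide)
  have e44 : Nat.nth Pnot3 44 = 199 := nth_eq 199 44 ⟨by norm_num, by norm_num⟩ (by decide)
  have e45 : Nat.nth Pnot3 45 = 211 := nth_eq 211 45 ⟨by norm_num, by norm_num⟩ (by decide)
  have e46 : Nat.nth Pnot3 46 = 223 := nth_eq 223 46 ⟨by norm_num, by norm_num⟩ (by decide)
  have e47 : Nat.nth Pnot3 47 = 227 := nth_eq 227 47 ⟨by norm_num, by norm_num⟩ (by decide)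
  have e48 : Nat.nth Pnot3 48 = 229 := nth_eq 229 48 ⟨by norm_num, by norm_num⟩ (by decide)
  have e49 : Nat.nth Pnot3 49 = 233 := nth_eq 233 49 ⟨by norm_num, by norm_num⟩ (by decide)
  have e50 : Nat.nth Pnot3 50 = 239 := nth_eq 239 50 ⟨by norm_num, by norm_num⟩ (by decide)
  have e51 : Nat.nth Pnot3 51 = 241 := nth_eq 241 51 ⟨by norm_num, by norm_num⟩ (by decide)
  simp [Finset.prod_range_succ, e0, e1, e2, e3, e4, e5, e6, e7, e8, e9, e10, e11, e12,
    e13, e14, e15, e16, e17, e18, e19, e20, e21, e22, e23, e24, e25, e26, e27, e28, e29,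
    e30, e31, e32, e33, e34, e35, e36, e37, e38, e39, e40, e41, e42, e43, e44, e45, e46,
    e47, e48, e49, e50, e51]

private lemma key_numeric : ∀ k : ℕ, 52 ≤ k →
    2 ^ (25 * k) < (∏ i ∈ Finset.range k, Nat.nth Pnot3 i) ^ 4 := by
  intro k hk
  induction k, hk using Nat.le_induction with
  | base =>
    rw [prod_nth_52, show 25 * 52 = 100 * 13 from rfl, pow_mul]
    norm_num
  | succ k hk ih =>
    have e51 : Nat.nth Pnot3 51 = 241 := nth_eq 241 51 ⟨by norm_num, by norm_num⟩ (by decide)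
    have hq : 241 ≤ Nat.nth Pnot3 k := by
      rw [← e51]
      exact Nat.nth_monotone pnot3_infinite (by omega)
    have hq4 : 2 ^ 25 < Nat.nth Pnot3 k ^ 4 :=
      lt_of_lt_of_le (by norm_num) (Nat.pow_le_pow_left hq 4)
    calc 2 ^ (25 * (k + 1)) = 2 ^ (25 * k) * 2 ^ 25 := by ring
      _ < (∏ i ∈ Finset.range k, Nat.nth Pnot3 i) ^ 4 * Nat.nth Pnot3 k ^ 4 :=
          Nat.mul_lt_mul_of_lt_of_lt ih hq4
      _ = (∏ i ∈ Finset.range (k+1), Nat.nth Pnot3 i) ^ 4 := by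
          rw [Finset.prod_range_succ, mul_pow]

theorem W_lt_rpow_four_twentyfive (h : ℕ) (hpos : 0 < h) (h3 : ¬ 3 ∣ h)
    (hω : 52 ≤ h.primeFactors.card) :
    (2 : ℝ) ^ h.primeFactors.card < (h : ℝ) ^ ((4 : ℝ) / 25) := by
  set k := h.primeFactors.card with hk
  have hmem : ∀ p ∈ h.primeFactors, Pnot3 p := by
    intro p hp
    refine ⟨Nat.prime_of_mem_primeFactors hp, ?_⟩
    rintro rfl
    exact h3 (Nat.dvd_of_mem_primeFactors hp)
  have h1 : ∏ i ∈ Finset.range k, Nat.nth Pnot3 i ≤ ∏ p ∈ h.primeFactors, p :=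
    prod_nth_le k h.primeFactors rfl hmem
  have h2 : ∏ p ∈ h.primeFactors, p ≤ h :=
    Nat.le_of_dvd hpos (Nat.prod_primeFactors_dvd h)
  have h3' : 2 ^ (25 * k) < h ^ 4 := by
    calc 2 ^ (25 * k) < (∏ i ∈ Finset.range k, Nat.nth Pnot3 i) ^ 4 := key_numeric k hω
      _ ≤ h ^ 4 := Nat.pow_le_pow_left (le_trans h1 h2) 4
  have hR : (2 : ℝ) ^ (25 * k : ℕ) < (h : ℝ) ^ (4 : ℕ) := by
    exact_mod_cast h3'
  have h2nn : (0:ℝ) ≤ 2 := by norm_num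
  have hhnn : (0:ℝ) ≤ (h : ℝ) := Nat.cast_nonneg h
  have key : ((2:ℝ) ^ (25 * k : ℕ)) ^ ((1:ℝ)/25) < ((h:ℝ) ^ (4:ℕ)) ^ ((1:ℝ)/25) :=
    Real.rpow_lt_rpow (by positivity) hR (by norm_num)
  have lhs_eq : ((2:ℝ) ^ (25 * k : ℕ)) ^ ((1:ℝ)/25) = (2:ℝ) ^ k := by
    rw [← Real.rpow_natCast (2:ℝ) (25 * k), ← Real.rpow_mul h2nn, ← Real.rpow_natCast (2:ℝ) k]
    congr 1
    push_cast
    ring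
  have rhs_eq : ((h:ℝ) ^ (4:ℕ)) ^ ((1:ℝ)/25) = (h:ℝ) ^ ((4:ℝ)/25) := by
    rw [← Real.rpow_natCast (h:ℝ) 4, ← Real.rpow_mul hhnn]
    norm_num
  rw [lhs_eq, rhs_eq] at key
  exact key
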